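/- Let G be a finite p-group and let M₁ and M₂ be two distinct maximal subgroups of G. Then |G'| ≤ p · |M₁' M₂'|, where M₁'M₂' denotes the subgroup generated by the derived subgroups of M₁ and M₂. -/

import Mathlib

/-- `G` is a minimal non-abelian group: non-abelian, but all proper subgroups abelian. -/
def IsMinimalNonabelian (G : Type*) [Group G] : Prop :=
  (¬ ∀ a b : G, a * b = b * a) ∧
    ∀ H : Subgroup G, H ≠ ⊤ → ∀ a ∈ H, ∀ b ∈ H, a * b = b * a

/-- `G` is an `𝒜_t`-group: it has a non-abelian subgroup of index `p ^ (t-1)`,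
but all subgroups of index `p ^ t` are abelian. -/
def IsAGroup (p t : ℕ) (G : Type*) [Group G] : Prop :=
  (∃ H : Subgroup G, H.index = p ^ (t - 1) ∧ ¬ ∀ a ∈ H, ∀ b ∈ H, a * b = b * a) ∧
    ∀ H : Subgroup G, H.index = p ^ t → ∀ a ∈ H, ∀ b ∈ H, a * b = b * a

section Aux

variable {p : ℕ} {G : Type*} [Group G]

/-- A maximal subgroup of a finite `p`-group has index `p`. -/
private lemma aux_coatom_index [Finite G] (hp : Fact p.Prime) (hG : IsPGroup p G)
    {M : Subgroup G} (hM : IsCoatom M) [M.Normal] : M.index = p := by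
  set π := QuotientGroup.mk' M with hπdef
  have hπs : Function.Surjective π := QuotientGroup.mk'_surjective M
  have key : ∀ K : Subgroup (G ⧸ M), K ≠ ⊥ → K = ⊤ := by
    intro K hK
    obtain ⟨k, hkK, hk1⟩ := SetLike.exists_of_lt hK.bot_lt
    obtain ⟨g, rfl⟩ := hπs k
    have hgM : g ∉ M := by
      intro hg
      exact hk1 (by rw [Subgroup.mem_bot]; exact (QuotientGroup.eq_one_iff g).mpr hg)
    have hcomap : K.comap π = ⊤ := by
      apply hM.2
      refine lt_of_le_of_ne (fun m hm => ?_) (fun h => ?_)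
      · have : π m = 1 := (QuotientGroup.eq_one_iff m).mpr hm
        show π m ∈ K
        rw [this]; exact K.one_mem
      · exact hgM (h ▸ hkK)
    calc K = (K.comap π).map π := (Subgroup.map_comap_eq_self_of_surjective hπs K).symm
      _ = ⊤ := by rw [hcomap, Subgroup.map_top_of_surjective _ hπs]
  have : Nontrivial (G ⧸ M) := by
    obtain ⟨g, -, hgM⟩ := SetLike.exists_of_lt (lt_top_iff_ne_top.mpr hM.1)
    exact ⟨π g, 1, fun h => hgM ((QuotientGroup.eq_one_iff g).mp h)⟩
  have hq : IsPGroup p (G ⧸ M) := hG.to_quotient M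
  obtain ⟨n, hn⟩ := hq.exists_card_eq
  have hn1 : n ≠ 0 := by
    intro h0
    rw [h0, pow_zero] at hn
    exact (Finite.one_lt_card (α := G ⧸ M)).ne' hn
  obtain ⟨g, hg⟩ := exists_prime_orderOf_dvd_card' (G := G ⧸ M) p
    (by rw [hn]; exact dvd_pow_self p hn1)
  have hg1 : g ≠ 1 := by
    intro h
    rw [h, orderOf_one] at hg
    exact hp.out.ne_one hg.symm
  have hzp : Subgroup.zpowers g = ⊤ :=
    key _ (fun h => hg1 (Subgroup.zpowers_eq_bot.mp h))
  rw [Subgroup.index_eq_card, ← Subgroup.card_top, ← hzp, Nat.card_zpowers, hg]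

/-- If a normal subgroup has prime index, it contains the commutator subgroup. -/
private lemma aux_commutator_le (hp : Fact p.Prime) {M : Subgroup G} [M.Normal]
    (h : M.index = p) : commutator G ≤ M := by
  have hcard : Nat.card (G ⧸ M) = p := by rw [← Subgroup.index_eq_card, h]
  have : IsCyclic (G ⧸ M) := isCyclic_of_prime_card hcard
  letI : CommGroup (G ⧸ M) := IsCyclic.commGroup
  have hle := Abelianization.commutator_subset_ker (QuotientGroup.mk' M)
  rwa [QuotientGroup.ker_mk'] at hle

end Aux

theorem stmt3 {p : ℕ} (hp : p.Prime) {G : Type*} [Group G] [Finite G]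
    (hG : IsPGroup p G) {M₁ M₂ : Subgroup G} (h₁ : IsCoatom M₁) (h₂ : IsCoatom M₂)
    (hne : M₁ ≠ M₂) :
    Nat.card (commutator G) ≤
      p * Nat.card
        ((commutator ↥M₁).map M₁.subtype ⊔ (commutator ↥M₂).map M₂.subtype : Subgroup G) := by
  haveI hpf : Fact p.Prime := ⟨hp⟩
  haveI : Group.IsNilpotent G := hG.isNilpotent
  have hnc : NormalizerCondition G := normalizerCondition_of_isNilpotent
  haveI n₁ : M₁.Normal := Subgroup.NormalizerCondition.normal_of_coatom M₁ hnc h₁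
  haveI n₂ : M₂.Normal := Subgroup.NormalizerCondition.normal_of_coatom M₂ hnc h₂
  have hmap : ∀ M : Subgroup G, (commutator ↥M).map M.subtype = ⁅M, M⁆ := fun M => by
    rw [commutator_def, Subgroup.map_commutator, ← MonoidHom.range_eq_map, M.range_subtype]
  rw [hmap M₁, hmap M₂]
  set N : Subgroup G := ⁅M₁, M₁⁆ ⊔ ⁅M₂, M₂⁆ with hNdef
  haveI hNnormal : N.Normal := Subgroup.sup_normal _ _
  -- basic facts
  have i₁ : M₁.index = p := aux_coatom_index hpf hG h₁
  have i₂ : M₂.index = p := aux_coatom_index hpf hG h₂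
  have c₁ : commutator G ≤ M₁ := aux_commutator_le hpf i₁
  have c₂ : commutator G ≤ M₂ := aux_commutator_le hpf i₂
  have hcm : ∀ M : Subgroup G, ⁅M, M⁆ ≤ commutator G := fun M =>
    (commutator_def G) ▸ Subgroup.commutator_mono le_top le_top
  have hself : ∀ M : Subgroup G, ⁅M, M⁆ ≤ M := fun M =>
    Subgroup.commutator_le.mpr fun g1 hg1 g2 hg2 => by
      rw [commutatorElement_def]
      exact mul_mem (mul_mem (mul_mem hg1 hg2) (inv_mem hg1)) (inv_mem hg2)
  have hNle : N ≤ commutator G := sup_le (hcm M₁) (hcm M₂)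
  have hNM₁ : N ≤ M₁ := sup_le (hself M₁) ((hcm M₂).trans c₁)
  have hNM₂ : N ≤ M₂ := sup_le ((hcm M₁).trans c₂) (hself M₂)
  -- pass to the quotient Q = G / N
  set π : G →* G ⧸ N := QuotientGroup.mk' N with hπdef
  have hπs : Function.Surjective π := QuotientGroup.mk'_surjective N
  have hkπ : π.ker = N := QuotientGroup.ker_mk' N
  set A : Subgroup (G ⧸ N) := M₁.map π with hAdef
  set B : Subgroup (G ⧸ N) := M₂.map π with hBdef
  haveI : Finite (G ⧸ N) := Quotient.finite _
  haveI nA : A.Normal := n₁.map π hπs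
  haveI nB : B.Normal := n₂.map π hπs
  have comapA : A.comap π = M₁ := by
    rw [hAdef, Subgroup.comap_map_eq, hkπ, sup_eq_left.mpr hNM₁]
  have comapB : B.comap π = M₂ := by
    rw [hBdef, Subgroup.comap_map_eq, hkπ, sup_eq_left.mpr hNM₂]
  have iA : A.index = p := by
    rw [hAdef, Subgroup.index_map, hkπ, sup_eq_left.mpr hNM₁,
      π.range_eq_top_of_surjective hπs, Subgroup.index_top, mul_one, i₁]
  have iB : B.index = p := by
    rw [hBdef, Subgroup.index_map, hkπ, sup_eq_left.mpr hNM₂,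
      π.range_eq_top_of_surjective hπs, Subgroup.index_top, mul_one, i₂]
  -- A and B are abelian
  have habA : ∀ x ∈ A, ∀ y ∈ A, x * y = y * x := by
    rintro _ ⟨m, hm, rfl⟩ _ ⟨m', hm', rfl⟩
    rw [← commutatorElement_eq_one_iff_mul_comm, ← map_commutatorElement]
    rw [← hkπ] at hNdef
    exact (QuotientGroup.eq_one_iff _).mpr
      (le_sup_left (α := Subgroup G) (Subgroup.commutator_mem_commutator hm hm'))
  have habB : ∀ x ∈ B, ∀ y ∈ B, x * y = y * x := by
    rintro _ ⟨m, hm, rfl⟩ _ ⟨m', hm', rfl⟩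
    rw [← commutatorElement_eq_one_iff_mul_comm, ← map_commutatorElement]
    exact (QuotientGroup.eq_one_iff _).mpr
      (le_sup_right (α := Subgroup G) (Subgroup.commutator_mem_commutator hm hm'))
  -- A ⊔ B = ⊤
  have hM₂M₁ : ¬M₂ ≤ M₁ := fun hle => h₁.1 (h₂.2 M₁ (lt_of_le_of_ne hle (Ne.symm hne)))
  have hsupAB : A ⊔ B = ⊤ := by
    have hsup : M₁ ⊔ M₂ = ⊤ := h₁.2 _ (left_lt_sup.mpr hM₂M₁)
    rw [hAdef, hBdef, ← Subgroup.map_sup, hsup, Subgroup.map_top_of_surjective _ hπs]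
  -- commutator of Q is central
  have cQA : commutator (G ⧸ N) ≤ A := aux_commutator_le hpf iA
  have cQB : commutator (G ⧸ N) ≤ B := aux_commutator_le hpf iB
  have hcen : commutator (G ⧸ N) ≤ Subgroup.center (G ⧸ N) := by
    intro z hz
    rw [Subgroup.mem_center_iff]
    intro g
    have hAc : A ≤ Subgroup.centralizer {z} := by
      intro a ha
      rw [Subgroup.mem_centralizer_iff]
      intro y hy
      rw [Set.mem_singleton_iff] at hy
      rw [hy]
      exact habA z (cQA hz) a ha
    have hBc : B ≤ Subgroup.centralizer {z} := by
      intro b hb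
      rw [Subgroup.mem_centralizer_iff]
      intro y hy
      rw [Set.mem_singleton_iff] at hy
      rw [hy]
      exact habB z (cQB hz) b hb
    have hT : (⊤ : Subgroup (G ⧸ N)) ≤ Subgroup.centralizer {z} := hsupAB ▸ sup_le hAc hBc
    exact (Subgroup.mem_centralizer_iff.mp (hT (Subgroup.mem_top g)) z rfl).symm
  letI : Bracket (G ⧸ N) (G ⧸ N) := commutatorElement
  have hcomm_central : ∀ u w : G ⧸ N, ⁅u, w⁆ ∈ Subgroup.center (G ⧸ N) := fun u w =>
    hcen ((commutator_def (G ⧸ N)) ▸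
      Subgroup.commutator_mem_commutator (Subgroup.mem_top u) (Subgroup.mem_top w))
  -- bilinearity of commutators
  have bil1 : ∀ u v w : G ⧸ N, ⁅u * v, w⁆ = ⁅u, w⁆ * ⁅v, w⁆ := by
    intro u v w
    have hv := Subgroup.mem_center_iff.mp (hcomm_central v w)
    have hu := Subgroup.mem_center_iff.mp (hcomm_central u w)
    calc ⁅u * v, w⁆ = u * ⁅v, w⁆ * u⁻¹ * ⁅u, w⁆ := by
          simp only [commutatorElement_def]; group
      _ = ⁅v, w⁆ * ⁅u, w⁆ := by rw [hv u]; group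
      _ = ⁅u, w⁆ * ⁅v, w⁆ := (hv ⁅u, w⁆).symm
  have bil2 : ∀ u v w : G ⧸ N, ⁅u, v * w⁆ = ⁅u, v⁆ * ⁅u, w⁆ := by
    intro u v w
    rw [← commutatorElement_inv (v * w) u, bil1 v w u, mul_inv_rev,
      commutatorElement_inv, commutatorElement_inv]
    exact (Subgroup.mem_center_iff.mp (hcomm_central u v) ⁅u, w⁆)
  -- choose b ∈ M₂ \ M₁
  obtain ⟨b, hbM₂, hbM₁⟩ := SetLike.not_le_iff_exists.mp hM₂M₁
  have hbbB : π b ∈ B := ⟨b, hbM₂, rfl⟩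
  have hbbA : π b ∉ A := fun h => hbM₁ (comapA ▸ (Subgroup.mem_comap.mpr h))
  -- the homomorphism x ↦ ⁅x, π b⁆
  set bb : G ⧸ N := π b with hbbdef
  have φmul : ∀ x y : G ⧸ N, ⁅x * y, bb⁆ = ⁅x, bb⁆ * ⁅y, bb⁆ := fun x y => bil1 x y bb
  let φ : G ⧸ N →* G ⧸ N :=
    { toFun := fun x => ⁅x, bb⁆
      map_one' := by group
      map_mul' := φmul }
  have hφ : ∀ x : G ⧸ N, φ x = ⁅x, bb⁆ := fun _ => rfl
  -- every element of Q is a * bb^i with a ∈ A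
  have hdecomp : ∀ x : G ⧸ N, ∃ a ∈ A, ∃ i : ℤ, x = a * bb ^ i := by
    have hA_fin : Finite ((G ⧸ N) ⧸ A) := Quotient.finite _
    set ρ : G ⧸ N →* (G ⧸ N) ⧸ A := QuotientGroup.mk' A with hρdef
    have hρs : Function.Surjective ρ := QuotientGroup.mk'_surjective A
    have hcardA : Nat.card ((G ⧸ N) ⧸ A) = p := by rw [← Subgroup.index_eq_card, iA]
    have hρb1 : ρ bb ≠ 1 := fun h => hbbA ((QuotientGroup.eq_one_iff bb).mp h)
    have hord : orderOf (ρ bb) = p := by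
      have hdvd : orderOf (ρ bb) ∣ p := hcardA ▸ orderOf_dvd_natCard (ρ bb)
      rcases (Nat.Prime.eq_one_or_self_of_dvd hp _ hdvd) with h | h
      · exact absurd (orderOf_eq_one_iff.mp h) hρb1
      · exact h
    have htop : Subgroup.zpowers (ρ bb) = ⊤ := by
      apply Subgroup.eq_top_of_card_eq
      rw [Nat.card_zpowers, hord, hcardA]
    intro x
    have : ρ x ∈ Subgroup.zpowers (ρ bb) := htop ▸ Subgroup.mem_top (ρ x)
    obtain ⟨i, hi⟩ := Subgroup.mem_zpowers_iff.mp this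
    refine ⟨x * bb ^ (-i), ?_, i, by group⟩
    have : ρ (x * bb ^ (-i)) = 1 := by
      rw [map_mul, map_zpow, ← hi]
      group
    exact (QuotientGroup.eq_one_iff _).mp this
  -- commutator Q ≤ range φ
  have hrange : commutator (G ⧸ N) ≤ φ.range := by
    rw [commutator_def, Subgroup.commutator_le]
    intro x _ y _
    obtain ⟨a₁, ha₁, i, rfl⟩ := hdecomp x
    obtain ⟨a₂, ha₂, j, rfl⟩ := hdecomp y
    have e1 : ⁅a₁ * bb ^ i, a₂ * bb ^ j⁆
        = ⁅a₁, a₂ * bb ^ j⁆ * ⁅bb ^ i, a₂ * bb ^ j⁆ := bil1 _ _ _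
    have e2 : ⁅a₁, a₂ * bb ^ j⁆ = ⁅a₁, a₂⁆ * ⁅a₁, bb ^ j⁆ := bil2 _ _ _
    have e3 : ⁅bb ^ i, a₂ * bb ^ j⁆ = ⁅bb ^ i, a₂⁆ * ⁅bb ^ i, bb ^ j⁆ := bil2 _ _ _
    have e4 : ⁅a₁, a₂⁆ = 1 := commutatorElement_eq_one_iff_mul_comm.mpr (habA a₁ ha₁ a₂ ha₂)
    have e5 : ⁅bb ^ i, bb ^ j⁆ = 1 :=
      commutatorElement_eq_one_iff_commute.mpr ((Commute.refl bb).zpow_zpow i j)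
    have e6 : ⁅a₁, bb ^ j⁆ = φ a₁ ^ j := by
      -- x ↦ ⁅a₁, x⁆ is multiplicative; use the hom ψ
      have hψmul : ∀ v w : G ⧸ N, ⁅a₁, v * w⁆ = ⁅a₁, v⁆ * ⁅a₁, w⁆ := fun v w => bil2 a₁ v w
      let ψ : G ⧸ N →* G ⧸ N :=
        { toFun := fun v => ⁅a₁, v⁆
          map_one' := by group
          map_mul' := hψmul }
      have : ψ (bb ^ j) = ψ bb ^ j := map_zpow ψ bb j
      exact this
    have e7 : ⁅bb ^ i, a₂⁆ = φ a₂ ^ (-i) := by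
      have : ⁅bb, a₂⁆ = ⁅a₂, bb⁆⁻¹ := (commutatorElement_inv a₂ bb).symm
      have h8 : ∀ v w : G ⧸ N, ⁅v * w, a₂⁆ = ⁅v, a₂⁆ * ⁅w, a₂⁆ := fun v w => bil1 v w a₂
      let χ : G ⧸ N →* G ⧸ N :=
        { toFun := fun v => ⁅v, a₂⁆
          map_one' := by group
          map_mul' := h8 }
      have h9 : χ (bb ^ i) = χ bb ^ i := map_zpow χ bb i
      show χ (bb ^ i) = φ a₂ ^ (-i)
      rw [h9, hφ]
      show ⁅bb, a₂⁆ ^ i = ⁅a₂, bb⁆ ^ (-i)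
      rw [← commutatorElement_inv a₂ bb, zpow_neg, inv_zpow]
    rw [e1, e2, e3, e4, e5, e6, e7, one_mul, mul_one]
    exact ⟨a₁ ^ j * a₂ ^ (-i), by rw [map_mul, map_zpow, map_zpow]⟩
  -- B ≤ ker φ, so |range φ| ≤ p
  have hBker : B ≤ φ.ker := by
    intro x hx
    rw [MonoidHom.mem_ker, hφ]
    exact commutatorElement_eq_one_iff_mul_comm.mpr (habB x hx bb hbbB)
  have hrange_card : Nat.card φ.range ≤ p := by
    have hdvd : φ.ker.index ∣ p := iB ▸ Subgroup.index_dvd_of_le hBker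
    rw [Subgroup.index_ker] at hdvd
    exact Nat.le_of_dvd hp.pos hdvd
  have hQcard : Nat.card (commutator (G ⧸ N)) ≤ p := by
    calc Nat.card (commutator (G ⧸ N)) ≤ Nat.card φ.range :=
          Subgroup.card_le_of_le hrange
      _ ≤ p := hrange_card
  -- final counting
  let f : ↥(commutator G) →* G ⧸ N := π.comp (commutator G).subtype
  have hfrange : f.range = commutator (G ⧸ N) := by
    have h1 : f.range = (commutator G).map π := by
      rw [MonoidHom.range_comp, Subgroup.range_subtype]
    rw [h1, commutator_def, Subgroup.map_commutator,
      Subgroup.map_top_of_surjective _ hπs, commutator_def]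
  have hfker : Nat.card f.ker = Nat.card N := by
    have h1 : f.ker = N.subgroupOf (commutator G) := by
      ext x
      simp only [MonoidHom.mem_ker, MonoidHom.comp_apply, Subgroup.mem_subgroupOf]
      exact QuotientGroup.eq_one_iff _
    rw [h1]
    exact Nat.card_congr (Subgroup.subgroupOfEquivOfLe hNle).toEquiv
  have hcount : Nat.card (commutator G) = Nat.card (commutator (G ⧸ N)) * Nat.card N := by
    rw [← hfrange, ← hfker]
    rw [Subgroup.card_eq_card_quotient_mul_card_subgroup f.ker]
    congr 1
    exact Nat.card_congr (QuotientGroup.quotientKerEquivRange f).toEquiv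
  rw [hcount]
  exact Nat.mul_le_mul_right _ hQcard
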